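/- Let X be a compact metric space, K ⊆ X compact, and f, g homeomorphisms of X such that the support supp(g,f) is contained in K and meets the complement of no connected component of K entirely (i.e., every connected component of K contains a point where f = g). Then for every connected component L of K one has f(L) = g(L). -/
import Mathlib


open Set Topology

/-- If the support of `g` with respect to `f` is strictly contained in the compact set
`K` (it is contained in `K` and every connected component of `K` contains a point where
`f = g`), then `f(L) = g(L)` for every connected component `L` of `K`. -/
theorem image_of_component_eq_of_strict_support
    {X : Type*} [MetricSpace X] [CompactSpace X] (f g : X ≃ₜ X) (K : Set X)
    (hK : IsCompact K) (hsupp : closure {x | f x ≠ g x} ⊆ K)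
    (hstrict : ∀ x ∈ K, ∃ y ∈ connectedComponentIn K x, y ∉ closure {x | f x ≠ g x}) :
    ∀ x ∈ K, ⇑f '' connectedComponentIn K x = ⇑g '' connectedComponentIn K x := by
  set S : Set X := closure {x | f x ≠ g x} with hS
  set h : X ≃ₜ X := f.trans g.symm with hh
  have hfix : ∀ z, z ∉ S → h z = z := by
    intro z hz
    have : ¬ (f z ≠ g z) := fun hne => hz (subset_closure hne)
    have hfg : f z = g z := not_ne_iff.mp this
    simp [hh, hfg]
  have hne_mem : ∀ z, h z ≠ z → z ∈ S ∧ h z ∈ S := by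
    intro z hz
    have hz1 : z ∈ S := by
      by_contra hzS
      exact hz (hfix z hzS)
    refine ⟨hz1, ?_⟩
    by_contra hzS
    have := hfix (h z) hzS
    exact hz (h.injective this)
  have hsymm_ne : ∀ z, h.symm z ≠ z → z ∈ S ∧ h.symm z ∈ S := by
    intro z hz
    have hz' : h (h.symm z) = z := h.apply_symm_apply z
    have hz2 : h.symm z ∈ S := by
      by_contra hzS
      have := hfix (h.symm z) hzS
      rw [this] at hz'
      exact hz hz'
    refine ⟨?_, hz2⟩
    by_contra hzS
    have := hfix z hzS
    have : h.symm (h z) = h.symm z := by rw [this]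
    rw [h.symm_apply_apply] at this
    exact hz (this ▸ rfl)
  have hmapsTo : MapsTo h K K := by
    intro z hzK
    by_cases hz : h z = z
    · rwa [hz]
    · exact hsupp (hne_mem z hz).2
  have hmapsTo' : MapsTo h.symm K K := by
    intro z hzK
    by_cases hz : h.symm z = z
    · rwa [hz]
    · exact hsupp (hsymm_ne z hz).2
  intro x hx
  obtain ⟨y, hyL, hyS⟩ := hstrict x hx
  set L : Set X := connectedComponentIn K x with hL
  have hLK : L ⊆ K := connectedComponentIn_subset K x
  have hLy : connectedComponentIn K y = L := (connectedComponentIn_eq hyL).symm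
  have hy_fix : h y = y := hfix y hyS
  -- h '' L ⊆ L
  have key : ∀ (e : X ≃ₜ X), MapsTo e K K → e y = y → e '' L ⊆ L := by
    intro e heK hey
    have hpre : IsPreconnected (e '' L) :=
      (isPreconnected_connectedComponentIn).image _ e.continuous.continuousOn
    have hsub : e '' L ⊆ K := by
      rintro _ ⟨z, hz, rfl⟩
      exact heK (hLK hz)
    have hyin : y ∈ e '' L := ⟨y, hyL, hey⟩
    calc e '' L ⊆ connectedComponentIn K y := hpre.subset_connectedComponentIn hyin hsub
      _ = L := hLy
  have h1 : h '' L ⊆ L := key h hmapsTo hy_fix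
  have hy_fix' : h.symm y = y := by
    conv_lhs => rw [← hy_fix]
    exact h.symm_apply_apply y
  have h2 : h.symm '' L ⊆ L := key h.symm hmapsTo' hy_fix'
  have h3 : L ⊆ h '' L := by
    intro z hz
    exact ⟨h.symm z, h2 ⟨z, hz, rfl⟩, h.apply_symm_apply z⟩
  have hHL : h '' L = L := le_antisymm h1 h3
  -- f '' L = g '' (h '' L)
  have : ∀ z, g (h z) = f z := by
    intro z; simp [hh]
  calc f '' L = g '' (h '' L) := by
        rw [← image_comp]
        exact image_congr fun z _ => (this z).symm
    _ = g '' L := by rw [hHL]
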